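/- Let $r\ge 1$ and $q\ge 2$ be integers and $d\in(0,1)$. Set $D = q d^{-r}$ and $\rho = e^{-q} d^{rq}$. Let $G$ be an $(r+1)$-colourable graph with colour classes $U, W_{(1)},\ldots,W_{(r)}$ such that $|U|\ge D$ and $\deg(u,W_{(s)}) \ge d|W_{(s)}|$ for every $u\in U$ and every $s\le r$. Then there exists a $q$-element subset $A\subseteq U$ with $|N(A)\cap W_{(s)}| \ge \rho |W_{(s)}|$ for every $s\le r$. -/

import Mathlib

open Finset

/-- Number of edges (ordered pairs) between `A` and `B`. -/
noncomputable def eBetween {V : Type*} (G : SimpleGraph V) (A B : Finset V) : ℕ :=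
  Nat.card {p : V × V // p.1 ∈ A ∧ p.2 ∈ B ∧ G.Adj p.1 p.2}

/-- Edge density between two disjoint vertex sets. -/
noncomputable def density {V : Type*} (G : SimpleGraph V) (A B : Finset V) : ℝ :=
  (eBetween G A B : ℝ) / ((A.card : ℝ) * (B.card : ℝ))

/-- Number of neighbours of `v` inside the set `S`. -/
noncomputable def degTo {V : Type*} (G : SimpleGraph V) (v : V) (S : Set V) : ℕ :=
  Nat.card {u : V // u ∈ S ∧ G.Adj v u}

/-- `G` is an `ℓ`-partite graph with (nonempty, independent) parts `P 0, …, P (ℓ-1)`. -/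
def IsPartiteOn {V : Type*} (G : SimpleGraph V) {ℓ : ℕ} (P : Fin ℓ → Finset V) : Prop :=
  (∀ i, (P i).Nonempty) ∧ (∀ i j, i ≠ j → Disjoint (P i) (P j)) ∧
  (∀ v, ∃ i, v ∈ P i) ∧ ∀ i, ∀ a ∈ P i, ∀ b ∈ P i, ¬ G.Adj a b

/-- `G` contains a copy of `H` (an injective graph homomorphism). -/
def ContainsCopy {W V : Type*} (H : SimpleGraph W) (G : SimpleGraph V) : Prop :=
  ∃ f : W → V, Function.Injective f ∧ ∀ a b, H.Adj a b → G.Adj (f a) (f b)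

/-- `H` admits a colouring with `χ(H) - 1` colours in which all colour classes are
independent except the first, which induces a graph of maximum degree at most 1. -/
def AlmostColourCritical {W : Type*} [Fintype W] (H : SimpleGraph W) : Prop :=
  ∃ k : ℕ, H.chromaticNumber = (k : ℕ∞) ∧
    ∃ φ : W → Fin (k - 1),
      (∀ a b c : W, (φ a).val = 0 → (φ b).val = 0 → (φ c).val = 0 →
        H.Adj a b → H.Adj a c → b = c) ∧
      ∀ a b : W, (φ a).val ≠ 0 → φ a = φ b → ¬ H.Adj a b


open Nat
set_option maxHeartbeats 2000000


private lemma cnl_prod_range_sub (k : ℕ) : ∏ i ∈ Finset.range k, (k - i) = k ! := by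
  rw [← Finset.prod_range_add_one_eq_factorial k, ← Finset.prod_range_reflect (fun j => j + 1) k]
  exact Finset.prod_congr rfl fun i hi => by rw [Finset.mem_range] at hi; omega

private noncomputable def cnlF (k : ℕ) : ℝ → ℝ := fun t => ∏ i ∈ Finset.range k, max (t - (i : ℝ)) 0

private lemma cnlF_props (k : ℕ) :
    ConvexOn ℝ Set.univ (cnlF k) ∧ Monotone (cnlF k) ∧ ∀ t, 0 ≤ cnlF k t := by
  induction k with
  | zero =>
      refine ⟨?_, ?_, ?_⟩
      · have h1 : cnlF 0 = fun _ : ℝ => (1:ℝ) := by funext t; simp [cnlF]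
        rw [h1]; exact convexOn_const (1:ℝ) convex_univ
      · intro a b _; simp [cnlF]
      · intro t; simp [cnlF]
  | succ k ih =>
      obtain ⟨hc, hm, h0⟩ := ih
      have hgc : ConvexOn ℝ Set.univ (fun t : ℝ => max (t - (k:ℝ)) 0) := by
        have h1 : ConvexOn ℝ Set.univ (fun t : ℝ => t - (k:ℝ)) := by
          simpa [Pi.sub_def] using (convexOn_id convex_univ).sub (concaveOn_const (k:ℝ) convex_univ)
        simpa [Pi.sup_def] using h1.sup (convexOn_const (0:ℝ) convex_univ)
      have hgm : Monotone (fun t : ℝ => max (t - (k:ℝ)) 0) :=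
        fun a b hab => max_le_max (by linarith) le_rfl
      have heq : cnlF (k+1) = cnlF k * (fun t : ℝ => max (t - (k:ℝ)) 0) := by
        funext t; simp [cnlF, Finset.prod_range_succ]
      refine ⟨?_, ?_, ?_⟩
      · rw [heq]
        exact hc.mul hgc (fun x _ => h0 x) (fun x _ => le_max_right _ _)
          ((hm.monovary hgm).monovaryOn _)
      · rw [heq]; intro a b hab
        exact mul_le_mul (hm hab) (hgm hab) (le_max_right _ _) (h0 b)
      · intro t; rw [heq]
        exact mul_nonneg (h0 t) (le_max_right _ _)

private lemma cnlF_nat (k m : ℕ) : cnlF k (m : ℝ) = (m.descFactorial k : ℝ) := by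
  rw [Nat.descFactorial_eq_prod_range, Nat.cast_prod, cnlF]
  refine Finset.prod_congr rfl fun i _ => ?_
  rcases le_or_gt i m with h | h
  · rw [Nat.cast_sub h]
    refine max_eq_left ?_
    have h' : (i:ℝ) ≤ (m:ℝ) := by exact_mod_cast h
    linarith
  · rw [Nat.sub_eq_zero_of_le h.le, Nat.cast_zero]
    refine max_eq_right ?_
    have h' : (m:ℝ) < (i:ℝ) := by exact_mod_cast h
    linarith

private lemma cnlF_lower (k : ℕ) (hk : 0 < k) {x : ℝ} (hx : (k : ℝ) ≤ x) :
    x ^ k * (k ! : ℝ) / (k : ℝ) ^ k ≤ cnlF k x := by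
  have hk0 : (0:ℝ) < (k:ℝ) := by exact_mod_cast hk
  have hx0 : (0:ℝ) < x := lt_of_lt_of_le hk0 hx
  have hprod : ∏ i ∈ Finset.range k, (x * (((k - i : ℕ)) : ℝ) / (k:ℝ))
      = x ^ k * (k ! : ℝ) / (k : ℝ) ^ k := by
    rw [Finset.prod_div_distrib, Finset.prod_mul_distrib, Finset.prod_const,
      ← Nat.cast_prod, cnl_prod_range_sub, Finset.prod_const, Finset.card_range]
  rw [← hprod]
  refine Finset.prod_le_prod (fun i _ => by positivity) (fun i hi => ?_)
  rw [Finset.mem_range] at hi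
  have hik : (i:ℝ) < (k:ℝ) := by exact_mod_cast hi
  have hcast : (((k - i : ℕ)) : ℝ) = (k:ℝ) - (i:ℝ) := by
    rw [Nat.cast_sub hi.le]
  rw [hcast]
  refine le_trans ?_ (le_max_left _ _)
  rw [div_le_iff₀ hk0]
  nlinarith [Nat.cast_nonneg (α := ℝ) i]

private lemma cnl_pow_le_exp_mul_factorial (k : ℕ) :
    ((k : ℝ)) ^ k ≤ Real.exp k * (k ! : ℝ) := by
  have h := Real.sum_le_exp_of_nonneg (x := (k:ℝ)) (Nat.cast_nonneg k) (k+1)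
  have hterm : ((k:ℝ)) ^ k / (k ! : ℝ) ≤ Real.exp k :=
    le_trans (Finset.single_le_sum (f := fun i => (k:ℝ) ^ i / (i ! : ℝ))
      (fun i _ => by positivity) (Finset.self_mem_range_succ k)) h
  rw [div_le_iff₀ (by positivity)] at hterm
  linarith

theorem common_neighbourhood_lemma {V : Type*} [Fintype V] (G : SimpleGraph V)
    (r q : ℕ) (d : ℝ) (hr : 1 ≤ r) (hq : 2 ≤ q) (hd0 : 0 < d) (hd1 : d < 1)
    (U : Finset V) (Wc : Fin r → Finset V)
    (hUdisj : ∀ s, Disjoint U (Wc s))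
    (hWdisj : ∀ s t, s ≠ t → Disjoint (Wc s) (Wc t))
    (hcover : ∀ v : V, v ∈ U ∨ ∃ s, v ∈ Wc s)
    (hUind : ∀ a ∈ U, ∀ b ∈ U, ¬ G.Adj a b)
    (hWind : ∀ s, ∀ a ∈ Wc s, ∀ b ∈ Wc s, ¬ G.Adj a b)
    (hU : (q : ℝ) / d ^ r ≤ (U.card : ℝ))
    (hdeg : ∀ u ∈ U, ∀ s, d * ((Wc s).card : ℝ) ≤ (degTo G u (Wc s : Set V) : ℝ)) :
    ∃ A : Finset V, A ⊆ U ∧ A.card = q ∧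
      ∀ s, Real.exp (-(q : ℝ)) * d ^ (r * q) * ((Wc s).card : ℝ) ≤
        (Nat.card {w : V // w ∈ Wc s ∧ ∀ a ∈ A, G.Adj a w} : ℝ) := by
  classical
  have hd0r : (0:ℝ) < d ^ r := pow_pos hd0 r
  have hdr1 : d ^ r ≤ 1 := pow_le_one₀ hd0.le hd1.le
  have hq0 : 0 < q := by omega
  have hUq : (q:ℝ) ≤ d ^ r * (U.card : ℝ) := by
    rw [div_le_iff₀ hd0r] at hU; linarith
  have hqU : q ≤ U.card := by
    have h1 : (q:ℝ) ≤ (U.card : ℝ) := le_trans hUq (by nlinarith [Nat.cast_nonneg (α := ℝ) U.card])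
    exact_mod_cast h1
  have hUne : U.Nonempty := Finset.card_pos.mp (by omega)
  obtain ⟨v₀, hv₀⟩ := hUne
  set Wh : Fin r → Finset V := fun s => if (Wc s).Nonempty then Wc s else {v₀} with hWhdef
  have hWhne : ∀ s, (Wh s).Nonempty := by
    intro s; by_cases h : (Wc s).Nonempty
    · simpa [hWhdef, h] using h
    · simp [hWhdef, h]
  set P := U.powersetCard q with hPdef
  set 𝒲 := Fintype.piFinset Wh with h𝒲def
  set ch : Finset V → Fin r → ℕ :=
    fun A s => ((Wh s).filter (fun w => (Wc s).Nonempty → ∀ a ∈ A, G.Adj a w)).card with hchdef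
  set mh : (Fin r → V) → ℕ :=
    fun f => (U.filter (fun u => ∀ s, (Wc s).Nonempty → G.Adj u (f s))).card with hmhdef
  have piF : ∀ (p : Fin r → V → Prop) (i1 : ∀ s, DecidablePred (p s))
      (i2 : DecidablePred fun f : Fin r → V => ∀ s, p s (f s)),
      Fintype.piFinset (fun s => @Finset.filter V (p s) (i1 s) (Wh s))
        = @Finset.filter _ _ i2 𝒲 := by
    intro p i1 i2; ext f
    simp only [Fintype.mem_piFinset, Finset.mem_filter, h𝒲def]
    exact ⟨fun h => ⟨fun s => (h s).1, fun s => (h s).2⟩, fun h s => ⟨h.1 s, h.2 s⟩⟩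
  have prod_ch : ∀ A : Finset V, ∏ s, ch A s
      = (𝒲.filter (fun f => ∀ s, (Wc s).Nonempty → ∀ a ∈ A, G.Adj a (f s))).card := by
    intro A
    simp only [hchdef]
    exact (Fintype.card_piFinset _).symm.trans
      (congrArg Finset.card (piF (fun s w => (Wc s).Nonempty → ∀ a ∈ A, G.Adj a w) _ _))
  have key : ∑ A ∈ P, ∏ s, ch A s = ∑ f ∈ 𝒲, (mh f).choose q := by
    have step1 : ∑ A ∈ P, ∏ s, ch A s
        = ∑ A ∈ P, ∑ f ∈ 𝒲, (if ∀ s, (Wc s).Nonempty → ∀ a ∈ A, G.Adj a (f s) then 1 else 0) := by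
      refine Finset.sum_congr rfl fun A _ => ?_
      rw [prod_ch A, Finset.card_filter]
    rw [step1, Finset.sum_comm]
    refine Finset.sum_congr rfl fun f _ => ?_
    rw [← Finset.card_filter]
    have hset : P.filter (fun A => ∀ s, (Wc s).Nonempty → ∀ a ∈ A, G.Adj a (f s))
        = (U.filter (fun u => ∀ s, (Wc s).Nonempty → G.Adj u (f s))).powersetCard q := by
      ext A
      simp only [Finset.mem_filter, Finset.mem_powersetCard, hPdef]
      constructor
      · rintro ⟨⟨hAU, hcard⟩, hadj⟩
        exact ⟨fun a ha => Finset.mem_filter.2 ⟨hAU ha, fun s hs => hadj s hs a ha⟩, hcard⟩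
      · rintro ⟨hsub, hcard⟩
        exact ⟨⟨fun a ha => (Finset.mem_filter.1 (hsub ha)).1, hcard⟩,
          fun s hs a ha => (Finset.mem_filter.1 (hsub ha)).2 s hs⟩
    rw [hset, Finset.card_powersetCard, hmhdef]
  have key2 : ∑ f ∈ 𝒲, mh f
      = ∑ u ∈ U, ∏ s, ((Wh s).filter (fun w => (Wc s).Nonempty → G.Adj u w)).card := by
    have step1 : ∑ f ∈ 𝒲, mh f
        = ∑ f ∈ 𝒲, ∑ u ∈ U, (if ∀ s, (Wc s).Nonempty → G.Adj u (f s) then 1 else 0) := by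
      refine Finset.sum_congr rfl fun f _ => ?_
      simp only [hmhdef]
      rw [Finset.card_filter]
    rw [step1, Finset.sum_comm]
    refine Finset.sum_congr rfl fun u _ => ?_
    rw [← Finset.card_filter]
    exact (congrArg Finset.card (piF (fun s w => (Wc s).Nonempty → G.Adj u w) _ _)).symm.trans
      (Fintype.card_piFinset _)
  have hdegTo : ∀ u : V, ∀ s, (degTo G u (Wc s : Set V))
      = ((Wc s).filter (fun w => G.Adj u w)).card := by
    intro u s
    rw [degTo, Nat.card_eq_fintype_card, Fintype.card_subtype]
    congr 1; ext w; simp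
  have hfac : ∀ u ∈ U, ∀ s, (if (Wc s).Nonempty then d else 1) * ((Wh s).card : ℝ)
      ≤ (((Wh s).filter (fun w => (Wc s).Nonempty → G.Adj u w)).card : ℝ) := by
    intro u hu s
    by_cases h : (Wc s).Nonempty
    · have hWhs : Wh s = Wc s := by simp [hWhdef, h]
      have hfilter : (Wh s).filter (fun w => (Wc s).Nonempty → G.Adj u w)
          = (Wc s).filter (fun w => G.Adj u w) := by
        rw [hWhs]; exact Finset.filter_congr (fun w _ => by simp [h])
      rw [hfilter, hWhs, if_pos h, ← hdegTo u s]
      exact hdeg u hu s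
    · have hWhs : Wh s = {v₀} := by simp [hWhdef, h]
      have hfilter : (Wh s).filter (fun w => (Wc s).Nonempty → G.Adj u w) = Wh s :=
        Finset.filter_true_of_mem (fun w _ => fun hs => absurd hs h)
      rw [hfilter, if_neg h, one_mul]
  set M : ℝ := ∏ s, ((Wh s).card : ℝ) with hMdef
  have hM : (0:ℝ) < M := Finset.prod_pos fun s _ => by
    exact_mod_cast Finset.card_pos.2 (hWhne s)
  have hcard𝒲 : (𝒲.card : ℝ) = M := by
    rw [h𝒲def, Fintype.card_piFinset, Nat.cast_prod]
  have degsum : d ^ r * (U.card : ℝ) * M ≤ ∑ f ∈ 𝒲, (mh f : ℝ) := by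
    have hcast : ∑ f ∈ 𝒲, (mh f : ℝ)
        = ∑ u ∈ U, ∏ s, (((Wh s).filter (fun w => (Wc s).Nonempty → G.Adj u w)).card : ℝ) := by
      rw [← Nat.cast_sum, key2]
      push_cast
      rfl
    rw [hcast]
    have hper : ∀ u ∈ U, d ^ r * M
        ≤ ∏ s, (((Wh s).filter (fun w => (Wc s).Nonempty → G.Adj u w)).card : ℝ) := by
      intro u hu
      have h1 : d ^ r * M ≤ ∏ s, ((if (Wc s).Nonempty then d else 1) * ((Wh s).card : ℝ)) := by
        rw [Finset.prod_mul_distrib, ← hMdef]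
        have h2 : d ^ r ≤ ∏ s : Fin r, (if (Wc s).Nonempty then d else 1) := by
          have h3 : d ^ r = ∏ _s : Fin r, d := by
            rw [Finset.prod_const, Finset.card_univ, Fintype.card_fin]
          rw [h3]
          refine Finset.prod_le_prod (fun s _ => hd0.le) (fun s _ => ?_)
          by_cases h : (Wc s).Nonempty <;> simp [h, hd1.le]
        exact mul_le_mul_of_nonneg_right h2 hM.le
      refine le_trans h1 (Finset.prod_le_prod (fun s _ => ?_) (fun s _ => hfac u hu s))
      have hcardpos : (0:ℝ) < ((Wh s).card : ℝ) := by
        exact_mod_cast Finset.card_pos.2 (hWhne s)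
      by_cases h : (Wc s).Nonempty <;> simp [h] <;> positivity
    calc d ^ r * (U.card : ℝ) * M = ∑ _u ∈ U, d ^ r * M := by
          rw [Finset.sum_const, nsmul_eq_mul]; ring
      _ ≤ _ := Finset.sum_le_sum hper
  set T : ℝ := ∑ f ∈ 𝒲, (mh f : ℝ) with hTdef
  set xb : ℝ := T / M with hxbdef
  have hxb_ge : d ^ r * (U.card : ℝ) ≤ xb := by
    rw [hxbdef, le_div_iff₀ hM]; exact degsum
  have hxbq : (q:ℝ) ≤ xb := le_trans hUq hxb_ge
  obtain ⟨hconv, hmono, hnn⟩ := cnlF_props q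
  have hJ : M * cnlF q xb ≤ ∑ f ∈ 𝒲, cnlF q (mh f) := by
    have hsum1 : ∑ _f ∈ 𝒲, M⁻¹ = 1 := by
      rw [Finset.sum_const, nsmul_eq_mul, hcard𝒲, mul_inv_cancel₀ hM.ne']
    have h := hconv.map_sum_le (t := 𝒲) (w := fun _ => M⁻¹) (p := fun f => ((mh f : ℝ)))
      (fun _ _ => inv_nonneg.2 hM.le) hsum1 (fun _ _ => Set.mem_univ _)
    simp only [smul_eq_mul] at h
    rw [← Finset.mul_sum, ← Finset.mul_sum] at h
    have hxbeq : M⁻¹ * ∑ f ∈ 𝒲, ((mh f : ℝ)) = xb := by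
      rw [hxbdef, hTdef]; ring
    rw [hxbeq] at h
    calc M * cnlF q xb ≤ M * (M⁻¹ * ∑ f ∈ 𝒲, cnlF q (mh f)) :=
          mul_le_mul_of_nonneg_left h hM.le
      _ = ∑ f ∈ 𝒲, cnlF q (mh f) := by field_simp
  have hfq : (0:ℝ) < (q ! : ℝ) := by exact_mod_cast Nat.factorial_pos q
  have hqq : (0:ℝ) < ((q:ℝ)) ^ q := by positivity
  have hchoose : ∀ m : ℕ, ((m.choose q : ℕ) : ℝ) = cnlF q m / (q ! : ℝ) := by
    intro m
    rw [cnlF_nat, Nat.descFactorial_eq_factorial_mul_choose]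
    push_cast
    field_simp
  have hSsum : ∑ A ∈ P, ∏ s, ((ch A s : ℕ) : ℝ) = (∑ f ∈ 𝒲, cnlF q (mh f)) / (q ! : ℝ) := by
    have h1 : ∑ A ∈ P, ∏ s, ((ch A s : ℕ) : ℝ) = ((∑ A ∈ P, ∏ s, ch A s : ℕ) : ℝ) := by
      push_cast; rfl
    rw [h1, key, Nat.cast_sum, Finset.sum_div]
    exact Finset.sum_congr rfl fun f _ => hchoose (mh f)
  have hSlow : M * xb ^ q / ((q:ℝ)) ^ q ≤ ∑ A ∈ P, ∏ s, ((ch A s : ℕ) : ℝ) := by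
    rw [hSsum, le_div_iff₀ hfq]
    have h1 : M * (xb ^ q * (q ! : ℝ) / ((q:ℝ)) ^ q) ≤ ∑ f ∈ 𝒲, cnlF q (mh f) :=
      le_trans (mul_le_mul_of_nonneg_left (cnlF_lower q hq0 hxbq) hM.le) hJ
    calc M * xb ^ q / ((q:ℝ)) ^ q * (q ! : ℝ)
        = M * (xb ^ q * (q ! : ℝ) / ((q:ℝ)) ^ q) := by ring
      _ ≤ _ := h1
  have hPcard : ((P.card : ℕ) : ℝ) ≤ ((U.card : ℝ)) ^ q / (q ! : ℝ) := by
    rw [hPdef, Finset.card_powersetCard, le_div_iff₀ hfq]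
    have h2 : (U.card.choose q * q ! : ℕ) ≤ U.card ^ q := by
      rw [mul_comm, ← Nat.descFactorial_eq_factorial_mul_choose]
      exact Nat.descFactorial_le_pow _ _
    exact_mod_cast h2
  have hexp : Real.exp (-(q:ℝ)) * ((q:ℝ)) ^ q ≤ (q ! : ℝ) := by
    rw [Real.exp_neg, inv_mul_le_iff₀ (Real.exp_pos _)]
    exact cnl_pow_le_exp_mul_factorial q
  have hxbpow : d ^ (r * q) * ((U.card : ℝ)) ^ q ≤ xb ^ q := by
    have h0 : (0:ℝ) ≤ d ^ r * (U.card : ℝ) := by positivity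
    have h1 := pow_le_pow_left₀ h0 hxb_ge q
    rwa [mul_pow, ← pow_mul] at h1
  have hxb0 : (0:ℝ) ≤ xb := le_trans (Nat.cast_nonneg q) hxbq
  have hfinal : (P.card : ℝ) * (Real.exp (-(q:ℝ)) * d ^ (r * q) * M)
      ≤ ∑ A ∈ P, ∏ s, ((ch A s : ℕ) : ℝ) := by
    refine le_trans ?_ hSlow
    have hrm0 : (0:ℝ) ≤ Real.exp (-(q:ℝ)) * d ^ (r * q) * M :=
      mul_nonneg (mul_nonneg (Real.exp_pos _).le (pow_nonneg hd0.le _)) hM.le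
    calc (P.card : ℝ) * (Real.exp (-(q:ℝ)) * d ^ (r * q) * M)
        ≤ (((U.card : ℝ)) ^ q / (q ! : ℝ)) * (Real.exp (-(q:ℝ)) * d ^ (r * q) * M) :=
          mul_le_mul_of_nonneg_right hPcard hrm0
      _ ≤ M * xb ^ q / ((q:ℝ)) ^ q := by
          rw [div_mul_eq_mul_div, div_le_div_iff₀ hfq hqq]
          calc ((U.card : ℝ)) ^ q * (Real.exp (-(q:ℝ)) * d ^ (r * q) * M) * ((q:ℝ)) ^ q
              = (Real.exp (-(q:ℝ)) * ((q:ℝ)) ^ q) * (d ^ (r * q) * ((U.card : ℝ)) ^ q) * M := by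
                ring
            _ ≤ (q ! : ℝ) * xb ^ q * M := by
                have hx0 : (0:ℝ) ≤ d ^ (r * q) * ((U.card : ℝ)) ^ q := by positivity
                exact mul_le_mul (mul_le_mul hexp hxbpow hx0 hfq.le) le_rfl hM.le
                  (mul_nonneg hfq.le (pow_nonneg hxb0 _))
            _ = M * xb ^ q * (q ! : ℝ) := by ring
  have hPne : P.Nonempty := by
    rw [hPdef]; exact Finset.powersetCard_nonempty.2 hqU
  have hex : ∃ A ∈ P, Real.exp (-(q:ℝ)) * d ^ (r * q) * M ≤ ∏ s, ((ch A s : ℕ) : ℝ) := by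
    by_contra hcon
    push_neg at hcon
    have hlt := Finset.sum_lt_sum_of_nonempty hPne hcon
    rw [Finset.sum_const, nsmul_eq_mul] at hlt
    linarith
  obtain ⟨A, hAP, hAlow⟩ := hex
  obtain ⟨hAU, hAcard⟩ := Finset.mem_powersetCard.1 (by rwa [hPdef] at hAP)
  refine ⟨A, hAU, hAcard, fun s => ?_⟩
  have hNat : (Nat.card {w : V // w ∈ Wc s ∧ ∀ a ∈ A, G.Adj a w} : ℕ)
      = ((Wc s).filter (fun w => ∀ a ∈ A, G.Adj a w)).card := by
    rw [Nat.card_eq_fintype_card, Fintype.card_subtype]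
    congr 1; ext w; simp
  by_cases hs : (Wc s).Nonempty
  · have hWhs : Wh s = Wc s := by simp [hWhdef, hs]
    have hchs : ch A s = ((Wc s).filter (fun w => ∀ a ∈ A, G.Adj a w)).card := by
      simp only [hchdef, hWhs]
      congr 1
      exact Finset.filter_congr (fun w _ => by simp [hs])
    set Q : ℝ := ∏ t ∈ Finset.univ.erase s, ((Wh t).card : ℝ) with hQdef
    have hQpos : (0:ℝ) < Q := Finset.prod_pos fun t _ => by
      exact_mod_cast Finset.card_pos.2 (hWhne t)
    have hMsplit : M = ((Wh s).card : ℝ) * Q := by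
      rw [hMdef, hQdef]
      exact (Finset.mul_prod_erase Finset.univ (fun t => ((Wh t).card : ℝ))
        (Finset.mem_univ s)).symm
    have hprodle : ∏ t, ((ch A t : ℕ) : ℝ) ≤ ((ch A s : ℕ) : ℝ) * Q := by
      rw [← Finset.mul_prod_erase _ (fun t => ((ch A t : ℕ) : ℝ)) (Finset.mem_univ s)]
      refine mul_le_mul_of_nonneg_left ?_ (Nat.cast_nonneg _)
      refine Finset.prod_le_prod (fun t _ => Nat.cast_nonneg _) (fun t _ => ?_)
      simp only [hchdef]
      exact_mod_cast Finset.card_filter_le _ _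
    have hkey : Real.exp (-(q:ℝ)) * d ^ (r * q) * ((Wc s).card : ℝ) * Q
        ≤ ((ch A s : ℕ) : ℝ) * Q := by
      calc Real.exp (-(q:ℝ)) * d ^ (r * q) * ((Wc s).card : ℝ) * Q
          = Real.exp (-(q:ℝ)) * d ^ (r * q) * M := by rw [hMsplit, hWhs]; ring
        _ ≤ ∏ t, ((ch A t : ℕ) : ℝ) := hAlow
        _ ≤ _ := hprodle
    have hconc := le_of_mul_le_mul_right hkey hQpos
    rw [hNat, ← hchs]
    exact hconc
  · have hzero : (Wc s).card = 0 := by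
      simp [Finset.not_nonempty_iff_eq_empty.1 hs]
    rw [hzero, Nat.cast_zero, mul_zero]
    exact Nat.cast_nonneg _
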